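/- There are exactly two similarity classes (over unimodular integer conjugation) of integer 3×3 matrices with characteristic polynomial λ^3 − 1, represented by Q1 = [[1,0,0],[0,−1,1],[0,−1,0]] and Q2 = [[1,0,1],[0,−1,1],[0,−1,0]]. -/

import Mathlib

open Matrix Polynomial

abbrev Zq {n : ℕ} (M : Matrix (Fin n) (Fin n) ℤ) : Type :=
  (Fin n → ℤ) ⧸ LinearMap.range M.mulVecLin

def qk {n : ℕ} (M : Matrix (Fin n) (Fin n) ℤ) (v : Fin n → ℤ) : Zq M :=
  Submodule.Quotient.mk v

/-- The Cayley graph `G(M)` on `ℤⁿ/Mℤⁿ` with connection set `±B_n`. -/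
def GM {n : ℕ} (M : Matrix (Fin n) (Fin n) ℤ) : SimpleGraph (Zq M) :=
  SimpleGraph.fromRel fun v w => ∃ i : Fin n, w - v = qk M (Pi.single i 1)

/-- The connection set `±B_n` inside the quotient group. -/
def genSet {n : ℕ} (M : Matrix (Fin n) (Fin n) ℤ) : Set (Zq M) :=
  {x | ∃ i : Fin n, x = qk M (Pi.single i 1) ∨ x = -qk M (Pi.single i 1)}

def NoNontrivial4Cycles {n : ℕ} (M : Matrix (Fin n) (Fin n) ℤ) : Prop :=
  ∀ a b c d : Zq M, a ∈ genSet M → b ∈ genSet M → c ∈ genSet M → d ∈ genSet M →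
    a + b + c + d = 0 → a = -b ∨ a = -c ∨ a = -d

def IsSignedPerm {n : ℕ} (P : Matrix (Fin n) (Fin n) ℤ) : Prop :=
  ∃ (σ : Equiv.Perm (Fin n)) (ε : Fin n → ℤ), (∀ i, ε i = 1 ∨ ε i = -1) ∧
    ∀ i j, P i j = if i = σ j then ε j else 0

def SimilarInt {n : ℕ} (A B : Matrix (Fin n) (Fin n) ℤ) : Prop :=
  ∃ U : Matrix (Fin n) (Fin n) ℤ, IsUnit U.det ∧ A * U = U * B

/-! ### Auxiliary lemmas -/

lemma qf_posdef {a b c x y : ℤ} (ha : 0 < a) (hd : b^2 - 4*a*c = -3)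
    (hxy : ¬(x = 0 ∧ y = 0)) : 0 < a*x^2 + b*x*y + c*y^2 := by
  rcases eq_or_ne y 0 with hy | hy
  · subst hy
    have hx : x ≠ 0 := by tauto
    have : 0 < x^2 := by positivity
    nlinarith
  · have h1 : 4*a*(a*x^2 + b*x*y + c*y^2) = (2*a*x + b*y)^2 + 3*y^2 := by nlinarith
    have hy2 : 1 ≤ y^2 := by
      have : 0 < y^2 := by positivity
      omega
    nlinarith [sq_nonneg (2*a*x + b*y)]

private lemma qf_key {m b'' c'' : ℤ} (hm : 1 ≤ m) (hb1 : -m ≤ b'') (hb2 : b'' < m)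
    (hd : b''^2 - 4*m*c'' = -3) (hc : m ≤ c'') : m = 1 := by
  have h1 : b''^2 ≤ m^2 := by nlinarith
  have h2 : 4*m*m ≤ 4*m*c'' := by nlinarith
  nlinarith

lemma qf_pos {a b c : ℤ} (ha : 0 < a) (hd : b^2 - 4*a*c = -3) :
    ∃ x y : ℤ, a*x^2 + b*x*y + c*y^2 = 1 := by
  classical
  let S : Set ℕ := {n : ℕ | ∃ x y : ℤ, IsCoprime x y ∧ a*x^2 + b*x*y + c*y^2 = (n : ℤ)}
  have hane : a.toNat ∈ S := by
    refine ⟨1, 0, isCoprime_one_left, ?_⟩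
    rw [Int.toNat_of_nonneg ha.le]; ring
  have hSne : S.Nonempty := ⟨_, hane⟩
  obtain ⟨x, y, hxy, hQ⟩ : sInf S ∈ S := Nat.sInf_mem hSne
  set m : ℕ := sInf S with hm
  have hnz : ¬(x = 0 ∧ y = 0) := by
    rintro ⟨rfl, rfl⟩
    exact not_isCoprime_zero_zero hxy
  have hmpos : 0 < (m : ℤ) := hQ ▸ qf_posdef ha hd hnz
  obtain ⟨u', v', huv⟩ := hxy
  obtain ⟨p, hp⟩ : ∃ t : ℤ, t = -v' := ⟨_, rfl⟩
  obtain ⟨q, hq⟩ : ∃ t : ℤ, t = u' := ⟨_, rfl⟩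
  have hdet : x*q - y*p = 1 := by rw [hp, hq]; linarith [huv]
  obtain ⟨b', hb'⟩ : ∃ t : ℤ, t = 2*a*x*p + b*(x*q + y*p) + 2*c*y*q := ⟨_, rfl⟩
  obtain ⟨k, hk⟩ : ∃ t : ℤ, t = (b' + m) / (2*m) := ⟨_, rfl⟩
  obtain ⟨p', hp'⟩ : ∃ t : ℤ, t = p - k*x := ⟨_, rfl⟩
  obtain ⟨q', hq'⟩ : ∃ t : ℤ, t = q - k*y := ⟨_, rfl⟩
  have hdet' : x*q' - y*p' = 1 := by rw [hp', hq']; linarith [hdet]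
  obtain ⟨c'', hc''⟩ : ∃ t : ℤ, t = a*p'^2 + b*p'*q' + c*q'^2 := ⟨_, rfl⟩
  obtain ⟨b'', hb''⟩ : ∃ t : ℤ, t = 2*a*x*p' + b*(x*q' + y*p') + 2*c*y*q' := ⟨_, rfl⟩
  have hbk : b'' = b' - 2*(m:ℤ)*k := by
    rw [hb'', hp', hq', hb']; linear_combination (-2*k) * hQ
  have h2m : 0 < 2*(m:ℤ) := by omega
  have hr1 : 0 ≤ (b' + m) % (2*m) := Int.emod_nonneg _ (by omega)
  have hr2 : (b' + m) % (2*m) < 2*m := Int.emod_lt_of_pos _ h2m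
  have hdm := Int.mul_ediv_add_emod (b' + m) (2*(m:ℤ))
  have hb''eq : b'' = (b' + m) % (2*m) - m := by rw [hbk, hk]; omega
  have hb1 : -(m:ℤ) ≤ b'' := by omega
  have hb2 : b'' < m := by omega
  have hdisc : b''^2 - 4*(a*x^2 + b*x*y + c*y^2)*c'' = (b^2 - 4*a*c)*(x*q' - y*p')^2 := by
    rw [hb'', hc'']; ring
  rw [hQ, hdet', hd] at hdisc
  have hcop' : IsCoprime p' q' := ⟨-y, x, by linarith [hdet']⟩
  have hnz' : ¬(p' = 0 ∧ q' = 0) := by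
    rintro ⟨h1, h2⟩
    rw [h1, h2] at hcop'
    exact not_isCoprime_zero_zero hcop'
  have hc''pos : 0 < c'' := by
    rw [hc'']; exact qf_posdef ha hd hnz'
  have hc''S : c''.toNat ∈ S := by
    refine ⟨p', q', hcop', ?_⟩
    rw [Int.toNat_of_nonneg hc''pos.le, hc'']
  have hmle : (m:ℤ) ≤ c'' := by
    have := Nat.sInf_le hc''S
    omega
  have hm1 : (m:ℤ) = 1 := qf_key hmpos hb1 hb2 (by linarith [hdisc]) hmle
  exact ⟨x, y, by rw [hQ, hm1]⟩

lemma qf_rep {a b c : ℤ} (hd : b^2 - 4*a*c = -3) :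
    ∃ x y s : ℤ, (s = 1 ∨ s = -1) ∧ a*x^2 + b*x*y + c*y^2 = s := by
  rcases lt_trichotomy a 0 with ha | ha | ha
  · obtain ⟨x, y, h⟩ := qf_pos (a := -a) (b := -b) (c := -c) (by omega) (by linarith [hd])
    exact ⟨x, y, -1, Or.inr rfl, by linarith⟩
  · exfalso; subst ha; nlinarith [sq_nonneg b]
  · obtain ⟨x, y, h⟩ := qf_pos ha hd
    exact ⟨x, y, 1, Or.inl rfl, h⟩

lemma build_V (A : Matrix (Fin 3) (Fin 3) ℤ) (v₀ : Fin 3 → ℤ) (hne : v₀ ≠ 0)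
    (hfix : A.mulVec v₀ = v₀) :
    ∃ (v : Fin 3 → ℤ) (V : Matrix (Fin 3) (Fin 3) ℤ),
      A.mulVec v = v ∧ V.det = 1 ∧ ∀ i, V i 0 = v i := by
  obtain ⟨G2, hG2⟩ : ∃ t : ℤ, t = (Int.gcd (v₀ 0) (v₀ 1) : ℤ) := ⟨_, rfl⟩
  obtain ⟨α, hα⟩ : ∃ t : ℤ, t = Int.gcdA (v₀ 0) (v₀ 1) := ⟨_, rfl⟩
  obtain ⟨β, hβ⟩ : ∃ t : ℤ, t = Int.gcdB (v₀ 0) (v₀ 1) := ⟨_, rfl⟩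
  have hbez2 : v₀ 0 * α + v₀ 1 * β = G2 := by
    rw [hα, hβ, hG2]; exact (Int.gcd_eq_gcd_ab (v₀ 0) (v₀ 1)).symm
  obtain ⟨G, hG⟩ : ∃ t : ℤ, t = (Int.gcd G2 (v₀ 2) : ℤ) := ⟨_, rfl⟩
  obtain ⟨γ, hγ⟩ : ∃ t : ℤ, t = Int.gcdA G2 (v₀ 2) := ⟨_, rfl⟩
  obtain ⟨δ, hδ⟩ : ∃ t : ℤ, t = Int.gcdB G2 (v₀ 2) := ⟨_, rfl⟩
  have hbezG : G2 * γ + v₀ 2 * δ = G := by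
    rw [hγ, hδ, hG]; exact (Int.gcd_eq_gcd_ab G2 (v₀ 2)).symm
  have hGdvdG2 : G ∣ G2 := by rw [hG]; exact Int.gcd_dvd_left _ _
  have hGdvd2 : G ∣ v₀ 2 := by rw [hG]; exact Int.gcd_dvd_right _ _
  have hG2dvd0 : G2 ∣ v₀ 0 := by rw [hG2]; exact Int.gcd_dvd_left _ _
  have hG2dvd1 : G2 ∣ v₀ 1 := by rw [hG2]; exact Int.gcd_dvd_right _ _
  have hGdvd0 : G ∣ v₀ 0 := hGdvdG2.trans hG2dvd0
  have hGdvd1 : G ∣ v₀ 1 := hGdvdG2.trans hG2dvd1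
  have hGne : G ≠ 0 := by
    intro h
    rw [h] at hGdvd0 hGdvd1 hGdvd2
    apply hne
    funext i
    fin_cases i
    · simpa using hGdvd0
    · simpa using hGdvd1
    · simpa using hGdvd2
  obtain ⟨v, hv₀v⟩ : ∃ v : Fin 3 → ℤ, ∀ i, v₀ i = G * v i := by
    refine ⟨fun i => v₀ i / G, fun i => ?_⟩
    fin_cases i
    · simpa using (Int.mul_ediv_cancel' hGdvd0).symm
    · simpa using (Int.mul_ediv_cancel' hGdvd1).symm
    · simpa using (Int.mul_ediv_cancel' hGdvd2).symm
  have hfixv : A.mulVec v = v := by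
    have h1 : v₀ = G • v := by funext i; simpa using hv₀v i
    rw [h1, Matrix.mulVec_smul] at hfix
    exact smul_right_injective (Fin 3 → ℤ) hGne hfix
  obtain ⟨g2, hg2⟩ : ∃ t : ℤ, G2 = G * t := hGdvdG2
  have hv2 := hv₀v 2
  have hcd : γ * g2 + δ * v 2 = 1 := by
    apply mul_left_cancel₀ hGne
    linear_combination (-γ)*hg2 + (-δ)*hv2 + hbezG
  obtain ⟨α', β', w0, w1, hw0, hw1, hab1⟩ :
      ∃ α' β' w0 w1 : ℤ, v 0 = g2 * w0 ∧ v 1 = g2 * w1 ∧ α' * w0 + β' * w1 = 1 := by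
    rcases eq_or_ne g2 0 with hg20 | hg20
    · have hG20 : G2 = 0 := by rw [hg2, hg20, mul_zero]
      have hcast : (Int.gcd (v₀ 0) (v₀ 1) : ℤ) = 0 := by rw [← hG2]; exact hG20
      have h00 := Int.gcd_eq_zero_iff.mp (by exact_mod_cast hcast)
      have hv00 : v 0 = 0 := by
        have := hv₀v 0; rw [h00.1] at this
        exact (mul_eq_zero.mp this.symm).resolve_left hGne
      have hv10 : v 1 = 0 := by
        have := hv₀v 1; rw [h00.2] at this
        exact (mul_eq_zero.mp this.symm).resolve_left hGne
      exact ⟨1, 0, 1, 0, by rw [hv00, hg20]; ring, by rw [hv10, hg20]; ring, by ring⟩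
    · obtain ⟨w0, hw0'⟩ : ∃ t : ℤ, v₀ 0 = G2 * t := hG2dvd0
      obtain ⟨w1, hw1'⟩ : ∃ t : ℤ, v₀ 1 = G2 * t := hG2dvd1
      have hv00 := hv₀v 0
      have hv01 := hv₀v 1
      have hv0 : v 0 = g2 * w0 := by
        apply mul_left_cancel₀ hGne
        linear_combination (-1)*hv00 + hw0' + w0*hg2
      have hv1 : v 1 = g2 * w1 := by
        apply mul_left_cancel₀ hGne
        linear_combination (-1)*hv01 + hw1' + w1*hg2
      have hbez2' : v 0 * α + v 1 * β = g2 := by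
        apply mul_left_cancel₀ hGne
        linear_combination (-α)*hv00 + (-β)*hv01 + hbez2 + hg2
      refine ⟨α, β, w0, w1, hv0, hv1, ?_⟩
      apply mul_left_cancel₀ hg20
      linear_combination (-α)*hv0 + (-β)*hv1 + hbez2'
  refine ⟨v, !![v 0, -β', -δ*w0; v 1, α', -δ*w1; v 2, 0, γ], hfixv, ?_, ?_⟩
  · rw [Matrix.det_fin_three]
    simp only [Matrix.cons_val', Matrix.cons_val_zero, Matrix.cons_val_one, Matrix.head_cons,
      Matrix.empty_val', Matrix.cons_val_fin_one, Matrix.head_fin_const, Matrix.cons_val_two,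
      Matrix.tail_cons, Matrix.of_apply]
    linear_combination (γ*α')*hw0 + (γ*β')*hw1 + (γ*g2 + δ*(v 2))*hab1 + hcd
  · intro i; fin_cases i <;> simp

lemma classify (A : Matrix (Fin 3) (Fin 3) ℤ) (hA : A.charpoly = X ^ 3 - 1) :
    SimilarInt A !![1,0,0;0,-1,1;0,-1,0] ∨ SimilarInt A !![1,0,1;0,-1,1;0,-1,0] := by
  classical
  -- trace and determinant
  have htr : A.trace = 0 := by
    have h := Matrix.trace_eq_neg_charpoly_coeff A
    rw [hA] at h
    simpa [Polynomial.coeff_one] using h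
  have hdetA : A.det = 1 := by
    have h := Matrix.det_eq_sign_charpoly_coeff A
    rw [hA] at h
    simpa [Polynomial.coeff_one] using h
  -- a fixed vector
  have hmap : (charmatrix A).map (Polynomial.eval (1:ℤ)) = 1 - A := by
    ext i j
    by_cases h : i = j
    · subst h
      simp [Matrix.charmatrix_apply_eq, Matrix.one_apply]
    · simp [Matrix.charmatrix_apply_ne _ _ _ h, Matrix.one_apply_ne h]
  have hdet1 : (1 - A).det = 0 := by
    have h0 := congrArg (Polynomial.eval (1:ℤ)) hA
    rw [Matrix.charpoly] at h0
    have h1 : Polynomial.eval (1:ℤ) (charmatrix A).det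
        = ((charmatrix A).map (Polynomial.evalRingHom (1:ℤ))).det :=
      RingHom.map_det (Polynomial.evalRingHom (1:ℤ)) (charmatrix A)
    rw [h1] at h0
    have h2 : ((charmatrix A).map (Polynomial.evalRingHom (1:ℤ))).det = (1 - A).det := by
      rw [show ((charmatrix A).map (Polynomial.evalRingHom (1:ℤ)))
          = (charmatrix A).map (Polynomial.eval (1:ℤ)) from rfl, hmap]
    rw [h2] at h0
    simpa using h0
  obtain ⟨v₀, hv₀ne, hv₀⟩ := Matrix.exists_mulVec_eq_zero_iff.mpr hdet1
  have hv₀fix : A.mulVec v₀ = v₀ := by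
    rw [Matrix.sub_mulVec, Matrix.one_mulVec, sub_eq_zero] at hv₀
    exact hv₀.symm
  obtain ⟨v, V, hv, hdetV, hVcol⟩ := build_V A v₀ hv₀ne hv₀fix
  -- conjugate A by V
  set W := V.adjugate with hW
  have hVW : V * W = 1 := by rw [hW, Matrix.mul_adjugate, hdetV, one_smul]
  have hWV : W * V = 1 := by rw [hW, Matrix.adjugate_mul, hdetV, one_smul]
  set A' := W * A * V with hA'def
  have hAV : A * V = V * A' := by
    rw [hA'def, ← Matrix.mul_assoc, ← Matrix.mul_assoc, hVW, Matrix.one_mul]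
  have hAVcol : ∀ i, (A * V) i 0 = V i 0 := by
    intro i
    have hv' := congrFun hv i
    simp only [Matrix.mulVec, dotProduct] at hv'
    rw [Matrix.mul_apply]
    simp only [hVcol]
    exact hv'
  have hcol : ∀ i, A' i 0 = (1 : Matrix (Fin 3) (Fin 3) ℤ) i 0 := by
    intro i
    have h1 : A' = W * (A * V) := by rw [hA'def, Matrix.mul_assoc]
    rw [h1, Matrix.mul_apply]
    simp only [hAVcol]
    rw [← Matrix.mul_apply, hWV]
  have hA'00 : A' 0 0 = 1 := by simpa using hcol 0
  have hA'10 : A' 1 0 = 0 := by simpa [Matrix.one_apply] using hcol 1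
  have hA'20 : A' 2 0 = 0 := by simpa [Matrix.one_apply] using hcol 2
  have htrA' : A'.trace = 0 := by
    rw [hA'def, Matrix.trace_mul_comm, ← Matrix.mul_assoc, hVW, Matrix.one_mul]
    exact htr
  have hdetW : W.det = 1 := by
    have h := congrArg Matrix.det hWV
    rw [Matrix.det_mul, hdetV, mul_one, Matrix.det_one] at h
    exact h
  have hdetA' : A'.det = 1 := by
    rw [hA'def, Matrix.det_mul, Matrix.det_mul, hdetW, hdetV, one_mul, mul_one, hdetA]
  set r := A' 0 1 with hr
  set s := A' 0 2 with hs
  set b00 := A' 1 1 with hb00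
  set b01 := A' 1 2 with hb01
  set b10 := A' 2 1 with hb10
  set b11 := A' 2 2 with hb11
  have htrB : b00 + b11 = -1 := by
    rw [Matrix.trace_fin_three, hA'00] at htrA'
    linarith
  have hdetB : b00*b11 - b01*b10 = 1 := by
    rw [Matrix.det_fin_three, hA'00, hA'10, hA'20] at hdetA'
    linear_combination hdetA'
  -- find a vector giving a unimodular 2x2 block
  have hdisc : (b11 - b00)^2 - 4*b10*(-b01) = -3 := by
    linear_combination (b00 + b11 - 1)*htrB - 4*hdetB
  obtain ⟨x, y, s0, hs0, hrep⟩ := qf_rep hdisc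
  set U2 : Matrix (Fin 3) (Fin 3) ℤ :=
    !![1, 0, 0; 0, x, b00*x + b01*y; 0, y, b10*x + b11*y] with hU2
  have hdetU2 : U2.det = s0 := by
    rw [hU2, Matrix.det_fin_three]
    simp only [Matrix.cons_val', Matrix.cons_val_zero, Matrix.cons_val_one, Matrix.head_cons,
      Matrix.empty_val', Matrix.cons_val_fin_one, Matrix.head_fin_const, Matrix.cons_val_two,
      Matrix.tail_cons, Matrix.of_apply]
    linear_combination hrep
  obtain ⟨r', hr'⟩ : ∃ t : ℤ, t = r*x + s*y := ⟨_, rfl⟩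
  obtain ⟨s', hs'⟩ : ∃ t : ℤ, t = r*(b00*x+b01*y) + s*(b10*x+b11*y) := ⟨_, rfl⟩
  set T : Matrix (Fin 3) (Fin 3) ℤ := !![1, r', s'; 0, 0, -1; 0, 1, -1] with hT
  have hA'eta : A' = !![1, r, s; 0, b00, b01; 0, b10, b11] := by
    rw [Matrix.eta_fin_three A', hA'00, hA'10, hA'20]
  have hA'U2 : A' * U2 = U2 * T := by
    rw [hA'eta, hU2, hT, Matrix.mul_fin_three, Matrix.mul_fin_three]
    ext i j
    fin_cases i <;> fin_cases j <;>
      simp only [Fin.zero_eta, Fin.mk_one, Fin.reduceFinMk, Matrix.cons_val', Matrix.cons_val_zero,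
        Matrix.cons_val_one, Matrix.head_cons, Matrix.empty_val', Matrix.cons_val_fin_one,
        Matrix.head_fin_const, Matrix.cons_val_two, Matrix.tail_cons, Matrix.of_apply] <;>
      first
        | rfl
        | linear_combination hr'
        | linear_combination -hr'
        | linear_combination hs'
        | linear_combination -hs'
        | linear_combination (x*b00 + y*b01)*htrB - x*hdetB
        | linear_combination (x*b10 + y*b11)*htrB - y*hdetB
        | ring
  -- kill the (0,2) entry and reduce the (0,1) entry mod 3
  obtain ⟨q3, hq3⟩ : ∃ t : ℤ, t = (r' - s') / 3 := ⟨_, rfl⟩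
  obtain ⟨r'', hr''⟩ : ∃ t : ℤ, t = (r' - s') % 3 := ⟨_, rfl⟩
  obtain ⟨p3, hp3⟩ : ∃ t : ℤ, t = -s' - 2*q3 := ⟨_, rfl⟩
  have hdm : 3 * q3 + r'' = r' - s' := by rw [hq3, hr'']; exact Int.mul_ediv_add_emod _ 3
  have hr''0 : 0 ≤ r'' := by rw [hr'']; exact Int.emod_nonneg _ (by norm_num)
  have hr''3 : r'' < 3 := by rw [hr'']; exact Int.emod_lt_of_pos _ (by norm_num)
  set E : Matrix (Fin 3) (Fin 3) ℤ := !![1, p3, q3; 0, 1, 0; 0, 0, 1] with hE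
  have hdetE : E.det = 1 := by
    rw [hE, Matrix.det_fin_three]
    simp only [Matrix.cons_val', Matrix.cons_val_zero, Matrix.cons_val_one, Matrix.head_cons,
      Matrix.empty_val', Matrix.cons_val_fin_one, Matrix.head_fin_const, Matrix.cons_val_two,
      Matrix.tail_cons, Matrix.of_apply]
    ring
  have hTE : T * E = E * !![1, r'', 0; (0:ℤ), 0, -1; 0, 1, -1] := by
    rw [hT, hE, Matrix.mul_fin_three, Matrix.mul_fin_three]
    ext i j
    fin_cases i <;> fin_cases j <;>
      simp only [Fin.zero_eta, Fin.mk_one, Fin.reduceFinMk, Matrix.cons_val', Matrix.cons_val_zero,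
        Matrix.cons_val_one, Matrix.head_cons, Matrix.empty_val', Matrix.cons_val_fin_one,
        Matrix.head_fin_const, Matrix.cons_val_two, Matrix.tail_cons, Matrix.of_apply] <;>
      first
        | rfl
        | linarith [hdm, hp3]
        | ring
  -- compose similarities
  have compose : ∀ (Q F : Matrix (Fin 3) (Fin 3) ℤ), F.det = 1 →
      !![1, r'', 0; (0:ℤ), 0, -1; 0, 1, -1] * F = F * Q → SimilarInt A Q := by
    intro Q F hdetF hTF
    refine ⟨V * U2 * E * F, ?_, ?_⟩
    · rw [Matrix.det_mul, Matrix.det_mul, Matrix.det_mul, hdetV, hdetU2, hdetE, hdetF]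
      rcases hs0 with h | h <;> rw [h] <;> norm_num
    · calc A * (V * U2 * E * F) = (((A * V) * U2) * E) * F := by
            simp only [Matrix.mul_assoc]
        _ = (((V * A') * U2) * E) * F := by rw [hAV]
        _ = ((V * (U2 * T)) * E) * F := by rw [Matrix.mul_assoc V A' U2, hA'U2]
        _ = (((V * U2) * (T * E))) * F := by simp only [Matrix.mul_assoc]
        _ = (((V * U2) * (E * !![1, r'', 0; (0:ℤ), 0, -1; 0, 1, -1]))) * F := by rw [hTE]
        _ = ((V * U2) * E) * (!![1, r'', 0; (0:ℤ), 0, -1; 0, 1, -1] * F) := by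
            simp only [Matrix.mul_assoc]
        _ = ((V * U2) * E) * (F * Q) := by rw [hTF]
        _ = (V * U2 * E * F) * Q := by simp only [Matrix.mul_assoc]
  have hcase : r'' = 0 ∨ r'' = 1 ∨ r'' = 2 := by omega
  rcases hcase with h | h | h
  · left
    apply compose _ !![-1,0,0;0,-1,0;0,-1,1]
    · decide
    · rw [h]
      decide
  · right
    apply compose _ !![-1,0,-1;0,1,0;0,1,-1]
    · decide
    · rw [h]
      decide
  · right
    apply compose _ !![-1,-1,0;0,1,-1;0,0,-1]
    · decide
    · rw [h]
      decide

theorem stmt_14 :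
    (!![1,0,0;0,-1,1;0,-1,0] : Matrix (Fin 3) (Fin 3) ℤ).charpoly = X ^ 3 - 1 ∧
    (!![1,0,1;0,-1,1;0,-1,0] : Matrix (Fin 3) (Fin 3) ℤ).charpoly = X ^ 3 - 1 ∧
    ¬ SimilarInt (!![1,0,0;0,-1,1;0,-1,0] : Matrix (Fin 3) (Fin 3) ℤ)
        !![1,0,1;0,-1,1;0,-1,0] ∧
    ∀ A : Matrix (Fin 3) (Fin 3) ℤ, A.charpoly = X ^ 3 - 1 →
      SimilarInt A !![1,0,0;0,-1,1;0,-1,0] ∨ SimilarInt A !![1,0,1;0,-1,1;0,-1,0] := by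
  refine ⟨?_, ?_, ?_, classify⟩
  · rw [Matrix.charpoly, Matrix.det_fin_three]
    norm_num [Matrix.charmatrix_apply, Matrix.diagonal_apply, Fin.ext_iff,
      Matrix.vecHead, Matrix.vecTail]
    simp
    ring
  · rw [Matrix.charpoly, Matrix.det_fin_three]
    norm_num [Matrix.charmatrix_apply, Matrix.diagonal_apply, Fin.ext_iff,
      Matrix.vecHead, Matrix.vecTail]
    simp
    ring
  · rintro ⟨U, hdet, hU⟩
    set Q1 : Matrix (Fin 3) (Fin 3) ℤ := !![1,0,0;0,-1,1;0,-1,0] with hQ1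
    set Q2 : Matrix (Fin 3) (Fin 3) ℤ := !![1,0,1;0,-1,1;0,-1,0] with hQ2
    have h2 : Q1 * Q1 * U = U * (Q2 * Q2) := by
      rw [Matrix.mul_assoc, hU, ← Matrix.mul_assoc, hU, Matrix.mul_assoc]
    have h3 : (Q1 * Q1 + Q1 + 1) * U = U * (Q2 * Q2 + Q2 + 1) := by
      rw [add_mul, add_mul, Matrix.mul_add, Matrix.mul_add, h2, hU, one_mul, mul_one]
    have e1 : Q1 * Q1 + Q1 + 1 = !![3,0,0;0,0,0;0,0,0] := by
      rw [hQ1, Matrix.one_fin_three]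
      norm_num [Matrix.mul_fin_three]
    have e2 : Q2 * Q2 + Q2 + 1 = !![3,-1,2;0,0,0;0,0,0] := by
      rw [hQ2, Matrix.one_fin_three]
      norm_num [Matrix.mul_fin_three]
    rw [e1, e2, Matrix.eta_fin_three U, Matrix.mul_fin_three, Matrix.mul_fin_three] at h3
    have h01 := congrFun (congrFun h3 0) 1
    have h10 := congrFun (congrFun h3 1) 0
    have h20 := congrFun (congrFun h3 2) 0
    simp only [Matrix.cons_val_zero, Matrix.cons_val_one, Matrix.head_cons, Matrix.cons_val_two,
      Matrix.tail_cons, Matrix.of_apply, Matrix.cons_val', Matrix.empty_val',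
      Matrix.cons_val_fin_one, Matrix.head_fin_const] at h01 h10 h20
    have h10' : U 1 0 = 0 := by omega
    have h20' : U 2 0 = 0 := by omega
    have hdet3 : U.det = U 0 0 * (U 1 1 * U 2 2 - U 1 2 * U 2 1) := by
      rw [Matrix.det_fin_three, h10', h20']; ring
    rw [Int.isUnit_iff, hdet3] at hdet
    obtain ⟨t, ht⟩ : (3 : ℤ) ∣ U 0 0 := ⟨-U 0 1, by linarith⟩
    rcases hdet with h | h <;> rw [ht] at h
    · have : (3:ℤ) ∣ 1 := ⟨t * (U 1 1 * U 2 2 - U 1 2 * U 2 1), by linarith⟩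
      norm_num at this
    · have : (3:ℤ) ∣ -1 := ⟨t * (U 1 1 * U 2 2 - U 1 2 * U 2 1), by linarith⟩
      norm_num at this
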